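/- Let a_1, …, a_m be positive integers, and let q_m and q_{m−1} be the denominators (in lowest terms) of the finite continued fractions [0; a_1, …, a_m] and [0; a_1, …, a_{m−1}] respectively. For N ≥ 1 let f(N) be the number of positive non-square integers d ≤ N such that the simple continued fraction expansion of √d has i-th partial quotient equal to a_i for every 1 ≤ i ≤ m. Then lim_{N→∞} f(N)/N = 1/(q_m·(q_m + q_{m−1})). -/

import Mathlib

/-- The `n`-th total quotient `α_n` of the continued fraction expansion of `θ`:
`α_0 = θ`, `α_{n+1} = 1/(α_n - ⌊α_n⌋)`. -/
noncomputable def cfAlpha (θ : ℝ) : ℕ → ℝ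
  | 0 => θ
  | n + 1 => 1 / Int.fract (cfAlpha θ n)

/-- The `n`-th partial quotient `a_n` of the continued fraction expansion of `θ`. -/
noncomputable def cfA (θ : ℝ) (n : ℕ) : ℤ := ⌊cfAlpha θ n⌋

/-- Numerators of the convergents of `θ`, shifted by two:
`cfP θ (n+2) = p_n`, with `p_{-2} = 0`, `p_{-1} = 1`, `p_n = a_n p_{n-1} + p_{n-2}`. -/
noncomputable def cfP (θ : ℝ) : ℕ → ℤ
  | 0 => 0
  | 1 => 1
  | n + 2 => cfA θ n * cfP θ (n + 1) + cfP θ n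

/-- Denominators of the convergents of `θ`, shifted by two:
`cfQ θ (n+2) = q_n`, with `q_{-2} = 1`, `q_{-1} = 0`, `q_n = a_n q_{n-1} + q_{n-2}`. -/
noncomputable def cfQ (θ : ℝ) : ℕ → ℤ
  | 0 => 1
  | 1 => 0
  | n + 2 => cfA θ n * cfQ θ (n + 1) + cfQ θ n

/-- `cfTail a m j` is the finite continued fraction `[a_{m-j+1}; a_{m-j+2}, …, a_m]` as a
rational number, so that `cfTail a m m = [a_1; a_2, …, a_m]` (and `cfTail a m 0 = 0`).
In particular `[0; a_1, …, a_m] = (cfTail a m m)⁻¹`. -/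
def cfTail (a : ℕ → ℕ) (m : ℕ) : ℕ → ℚ
  | 0 => 0
  | j + 1 => a (m - j) + (cfTail a m j)⁻¹

namespace CF8

/-- Continuant of a list. -/
def K : List ℕ → ℕ
  | [] => 1
  | [a] => a
  | a :: b :: l => a * K (b :: l) + K l

/-- Continuant of the tail. -/
def Kt : List ℕ → ℕ
  | [] => 0
  | _ :: l => K l

lemma K_cons (a : ℕ) (l : List ℕ) : K (a :: l) = a * K l + Kt l := by
  cases l <;> simp [K, Kt]

lemma K_pos {l : List ℕ} (h : ∀ x ∈ l, 0 < x) : 0 < K l := by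
  induction l with
  | nil => simp [K]
  | cons a t ih =>
    rw [K_cons]
    have ha : 0 < a := h a (by simp)
    have := ih (fun x hx => h x (by simp [hx]))
    positivity

lemma K_coprime (l : List ℕ) : Nat.Coprime (K l) (Kt l) := by
  induction l with
  | nil => simp [K, Kt, Nat.Coprime]
  | cons a t ih =>
    rw [K_cons]
    show Nat.Coprime (a * K t + Kt t) (K t)
    have h1 : Nat.Coprime (Kt t + a * K t) (K t) :=
      (Nat.coprime_add_mul_right_left (Kt t) (K t) a).mpr ih.symm
    have h2 : a * K t + Kt t = Kt t + a * K t := by ring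
    rw [h2]
    exact h1

lemma Kt_le_K {l : List ℕ} (h : ∀ x ∈ l, 0 < x) : Kt l ≤ K l := by
  cases l with
  | nil => simp [K, Kt]
  | cons a t =>
    rw [K_cons]
    show K t ≤ a * K t + Kt t
    have ha : 1 ≤ a := h a (by simp)
    nlinarith [Nat.zero_le (Kt t), Nat.zero_le (K t)]

/-- determinant identity -/
lemma detK : ∀ l : List ℕ, l ≠ [] →
    ((K l : ℤ) * Kt l.dropLast - Kt l * K l.dropLast) = (-1) ^ l.length := by
  intro l
  induction l with
  | nil => intro h; exact absurd rfl h
  | cons a t ih =>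
    intro _
    cases t with
    | nil => simp [K, Kt]
    | cons b t' =>
      have hne : (b :: t') ≠ [] := by simp
      have H := ih hne
      rw [List.dropLast_cons_of_ne_nil hne]
      rw [K_cons a (b :: t'), K_cons a ((b :: t').dropLast)]
      show ((a * K (b :: t') + Kt (b :: t') : ℕ) : ℤ) * (K ((b :: t').dropLast)) -
        (K (b :: t') : ℤ) * ((a * K ((b :: t').dropLast) + Kt ((b :: t').dropLast) : ℕ)) = _
      push_cast
      have : ((K (b :: t') : ℤ) * Kt ((b :: t').dropLast) -
          Kt (b :: t') * K ((b :: t').dropLast)) = (-1) ^ (b :: t').length := H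
      rw [List.length_cons]
      rw [pow_succ]
      nlinarith [this]


/-- value [0; l] -/
def V : List ℕ → ℚ
  | [] => 0
  | a :: l => ((a : ℚ) + V l)⁻¹

/-- value [0; l, 1] i.e. other endpoint -/
def Vmu : List ℕ → ℚ
  | [] => 1
  | a :: l => ((a : ℚ) + Vmu l)⁻¹

lemma V_nonneg {l : List ℕ} (h : ∀ x ∈ l, 0 < x) : 0 ≤ V l := by
  cases l with
  | nil => simp [V]
  | cons a t =>
    have ha : (1 : ℚ) ≤ a := by exact_mod_cast h a (by simp)
    have ht : 0 ≤ V t := V_nonneg (fun x hx => h x (by simp [hx]))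
    have : (0:ℚ) < (a : ℚ) + V t := by linarith
    simp only [V]
    positivity

lemma V_le_one {l : List ℕ} (h : ∀ x ∈ l, 0 < x) : V l ≤ 1 := by
  cases l with
  | nil => simp [V]
  | cons a t =>
    have ha : (1 : ℚ) ≤ a := by exact_mod_cast h a (by simp)
    have ht : 0 ≤ V t := V_nonneg (fun x hx => h x (by simp [hx]))
    have h1 : (1:ℚ) ≤ (a : ℚ) + V t := by linarith
    simpa [V] using inv_le_one_of_one_le₀ h1

lemma Vmu_nonneg {l : List ℕ} (h : ∀ x ∈ l, 0 < x) : 0 ≤ Vmu l := by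
  cases l with
  | nil => simp [Vmu]
  | cons a t =>
    have ha : (1 : ℚ) ≤ a := by exact_mod_cast h a (by simp)
    have ht : 0 ≤ Vmu t := Vmu_nonneg (fun x hx => h x (by simp [hx]))
    have : (0:ℚ) < (a : ℚ) + Vmu t := by linarith
    simp only [Vmu]
    positivity

lemma Vmu_le_one {l : List ℕ} (h : ∀ x ∈ l, 0 < x) : Vmu l ≤ 1 := by
  cases l with
  | nil => simp [Vmu]
  | cons a t =>
    have ha : (1 : ℚ) ≤ a := by exact_mod_cast h a (by simp)
    have ht : 0 ≤ Vmu t := Vmu_nonneg (fun x hx => h x (by simp [hx]))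
    have h1 : (1:ℚ) ≤ (a : ℚ) + Vmu t := by linarith
    simpa [Vmu] using inv_le_one_of_one_le₀ h1

lemma inv_add_div {a P Q : ℚ} (hQ : 0 < Q) (h : 0 < a * Q + P) :
    ((a : ℚ) + P / Q)⁻¹ = Q / (a * Q + P) := by
  have h1 : (a : ℚ) + P / Q = (a * Q + P) / Q := by field_simp
  rw [h1, inv_div]

lemma Kt_cons (a : ℕ) (l : List ℕ) : Kt (a :: l) = K l := rfl

lemma V_eq {l : List ℕ} (h : ∀ x ∈ l, 0 < x) : V l = (Kt l : ℚ) / (K l : ℚ) := by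
  induction l with
  | nil => simp [V, K, Kt]
  | cons a t ih =>
    have ht : ∀ x ∈ t, 0 < x := fun x hx => h x (by simp [hx])
    have hK : (0:ℚ) < (K t : ℚ) := by exact_mod_cast K_pos ht
    have ha : (1 : ℚ) ≤ a := by exact_mod_cast h a (by simp)
    have hKt : (0:ℚ) ≤ (Kt t : ℚ) := by positivity
    have hden : (0:ℚ) < (a : ℚ) * K t + Kt t := by nlinarith
    show ((a : ℚ) + V t)⁻¹ = _
    rw [ih ht, inv_add_div hK hden, Kt_cons, K_cons]
    push_cast
    ring_nf

lemma Vmu_eq {l : List ℕ} (hne : l ≠ []) (h : ∀ x ∈ l, 0 < x) :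
    Vmu l = ((Kt l + Kt l.dropLast : ℕ) : ℚ) / ((K l + K l.dropLast : ℕ) : ℚ) := by
  induction l with
  | nil => exact absurd rfl hne
  | cons a t ih =>
    have ha : (1 : ℚ) ≤ a := by exact_mod_cast h a (by simp)
    cases t with
    | nil =>
      show ((a : ℚ) + 1)⁻¹ = _
      simp [K, Kt]
    | cons b t' =>
      set u := b :: t' with hu
      have hne' : u ≠ [] := by simp [hu]
      have ht : ∀ x ∈ u, 0 < x := fun x hx => h x (by simp [hu] at hx ⊢; tauto)
      have H := ih hne' ht
      have hdl : ∀ x ∈ u.dropLast, 0 < x := fun x hx => ht x (List.dropLast_subset _ hx)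
      have hq : (0:ℚ) < (K u : ℚ) := by exact_mod_cast K_pos ht
      have hq' : (0:ℚ) < (K u.dropLast : ℚ) := by exact_mod_cast K_pos hdl
      have hp : (0:ℚ) ≤ (Kt u : ℚ) := by positivity
      have hp' : (0:ℚ) ≤ (Kt u.dropLast : ℚ) := by positivity
      have hQ : (0:ℚ) < ((K u : ℚ) + K u.dropLast) := by linarith
      have hD : (0:ℚ) < (a:ℚ) * ((K u : ℚ) + K u.dropLast) + ((Kt u : ℚ) + Kt u.dropLast) := by
        nlinarith
      rw [List.dropLast_cons_of_ne_nil hne']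
      show ((a : ℚ) + Vmu u)⁻¹ = _
      rw [H]
      have e1 : ((a : ℚ) + ((Kt u + Kt u.dropLast : ℕ) : ℚ) / ((K u + K u.dropLast : ℕ) : ℚ))⁻¹
          = ((K u + K u.dropLast : ℕ) : ℚ) /
            ((a:ℚ) * ((K u + K u.dropLast : ℕ) : ℚ) + ((Kt u + Kt u.dropLast : ℕ) : ℚ)) := by
        apply inv_add_div
        · push_cast; linarith
        · push_cast; nlinarith
      rw [e1]
      rw [show Kt (a :: u) = K u from rfl, show Kt (a :: u.dropLast) = K u.dropLast from rfl,
        show K (a :: u) = a * K u + Kt u from K_cons a u,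
        show K (a :: u.dropLast) = a * K u.dropLast + Kt u.dropLast from K_cons a u.dropLast]
      have hd1 : (0:ℚ) < (a:ℚ) * ((K u + K u.dropLast : ℕ) : ℚ) + ((Kt u + Kt u.dropLast : ℕ) : ℚ) := by
        push_cast; nlinarith
      have hd2 : (0:ℚ) < ((a * K u + Kt u + (a * K u.dropLast + Kt u.dropLast) : ℕ) : ℚ) := by
        push_cast; nlinarith
      rw [div_eq_div_iff hd1.ne' hd2.ne']
      push_cast
      ring

/-- the list [b (m-j+1), ..., b m] -/
def lst (b : ℕ → ℕ) (m : ℕ) : ℕ → List ℕ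
  | 0 => []
  | j + 1 => b (m - j) :: lst b m j

lemma lst_length (b : ℕ → ℕ) (m j : ℕ) : (lst b m j).length = j := by
  induction j with
  | zero => rfl
  | succ j ih => simp [lst, ih]

lemma lst_getD (b : ℕ → ℕ) (m : ℕ) : ∀ j i, j ≤ m → i < j →
    (lst b m j).getD i 0 = b (m - j + 1 + i) := by
  intro j
  induction j with
  | zero => intro i _ hi; omega
  | succ j ih =>
    intro i hj hi
    cases i with
    | zero =>
      show b (m - j) = b (m - (j+1) + 1 + 0)
      congr 1
      omega
    | succ i =>
      show (lst b m j).getD i 0 = _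
      rw [ih i (by omega) (by omega)]
      congr 1
      omega

lemma lst_pos {b : ℕ → ℕ} {m : ℕ} (hb : ∀ i, 1 ≤ i → i ≤ m → 0 < b i) :
    ∀ j, j ≤ m → ∀ x ∈ lst b m j, 0 < x := by
  intro j
  induction j with
  | zero => intro _ x hx; simp [lst] at hx
  | succ j ih =>
    intro hj x hx
    simp only [lst, List.mem_cons] at hx
    rcases hx with rfl | hx
    · exact hb _ (by omega) (by omega)
    · exact ih (by omega) x hx

lemma lst_dropLast (b : ℕ → ℕ) (m : ℕ) : ∀ j, (lst b m (j+1)).dropLast = lst b (m-1) j := by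
  intro j
  induction j with
  | zero => rfl
  | succ j ih =>
    show (b (m - (j+1)) :: lst b m (j+1)).dropLast = b (m - 1 - j) :: lst b (m-1) j
    rw [List.dropLast_cons_of_ne_nil (by simp [lst])]
    rw [ih]
    have h1 : m - (j+1) = m - 1 - j := by omega
    rw [h1]

lemma cfTail_inv (b : ℕ → ℕ) (m : ℕ) : ∀ j, (cfTail b m j)⁻¹ = V (lst b m j) := by
  intro j
  induction j with
  | zero => simp [cfTail, V, lst]
  | succ j ih =>
    show (((b (m - j) : ℕ) : ℚ) + (cfTail b m j)⁻¹)⁻¹ = V (b (m - j) :: lst b m j)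
    rw [ih]
    rfl
lemma transfer {c : ℕ} (hc1 : 1 ≤ (c:ℝ)) {u v θ : ℝ} (hirr' : Irrational θ⁻¹)
    (h0 : 0 < θ) (hu0 : 0 ≤ u) (huv : u ≤ v) (hv1 : v ≤ 1) :
    ((((c:ℝ)+v)⁻¹ < θ ∧ θ < ((c:ℝ)+u)⁻¹) ↔
      (⌊θ⁻¹⌋ = (c:ℤ) ∧ (u < Int.fract θ⁻¹ ∧ Int.fract θ⁻¹ < v))) := by
  have hcu : (0:ℝ) < (c:ℝ) + u := by linarith
  have hcv : (0:ℝ) < (c:ℝ) + v := by linarith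
  have h1 : ((c:ℝ)+v)⁻¹ < θ ↔ θ⁻¹ < (c:ℝ) + v := inv_lt_comm₀ hcv h0
  have h2 : θ < ((c:ℝ)+u)⁻¹ ↔ (c:ℝ) + u < θ⁻¹ := lt_inv_comm₀ h0 hcu
  rw [h1, h2]
  constructor
  · rintro ⟨hv', hu'⟩
    have hfl : ⌊θ⁻¹⌋ = (c:ℤ) := by
      rw [Int.floor_eq_iff]
      constructor
      · push_cast; linarith
      · push_cast; linarith
    refine ⟨hfl, ?_, ?_⟩
    · rw [Int.fract, hfl]; push_cast; linarith
    · rw [Int.fract, hfl]; push_cast; linarith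
  · rintro ⟨hfl, hu', hv'⟩
    rw [Int.fract, hfl] at hu' hv'
    push_cast at hu' hv'
    constructor
    · linarith
    · linarith
lemma cfAlpha_shift (ψ : ℝ) : ∀ i, 1 ≤ i →
    cfAlpha ψ (i + 1) = cfAlpha (Int.fract (cfAlpha ψ 1)) i := by
  intro i
  induction i with
  | zero => omega
  | succ i ih =>
    intro _
    rcases Nat.eq_zero_or_pos i with rfl | hi
    · show 1 / Int.fract (cfAlpha ψ 1) = 1 / Int.fract (Int.fract (cfAlpha ψ 1))
      rw [Int.fract_fract]
    · show 1 / Int.fract (cfAlpha ψ (i+1)) = 1 / Int.fract (cfAlpha (Int.fract (cfAlpha ψ 1)) i)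
      rw [ih hi]

lemma cfAlpha_fract (θ : ℝ) : ∀ i, 1 ≤ i → cfAlpha θ i = cfAlpha (Int.fract θ) i := by
  intro i
  induction i with
  | zero => omega
  | succ i ih =>
    intro _
    rcases Nat.eq_zero_or_pos i with rfl | hi
    · show 1 / Int.fract (cfAlpha θ 0) = 1 / Int.fract (cfAlpha (Int.fract θ) 0)
      show 1 / Int.fract θ = 1 / Int.fract (Int.fract θ)
      rw [Int.fract_fract]
    · show 1 / Int.fract (cfAlpha θ i) = 1 / Int.fract (cfAlpha (Int.fract θ) i)
      rw [ih hi]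

lemma cfA_fract (θ : ℝ) (i : ℕ) (hi : 1 ≤ i) : cfA θ i = cfA (Int.fract θ) i := by
  unfold cfA
  rw [cfAlpha_fract θ i hi]

/-- Step A: interval characterization. -/
lemma stepA : ∀ (l : List ℕ), (∀ x ∈ l, 0 < x) → ∀ θ : ℝ, Irrational θ → 0 < θ → θ < 1 →
    ((∀ i : ℕ, 1 ≤ i → i ≤ l.length → cfA θ i = (l.getD (i-1) 0 : ℤ)) ↔
      (min ((V l : ℚ) : ℝ) ((Vmu l : ℚ) : ℝ) < θ ∧ θ < max ((V l : ℚ) : ℝ) ((Vmu l : ℚ) : ℝ))) := by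
  intro l
  induction l with
  | nil =>
    intro _ θ _ h0 h1
    constructor
    · intro _
      constructor
      · simpa [V, Vmu] using h0
      · simpa [V, Vmu] using h1
    · intro _ i h1i hi0
      simp at hi0
      omega
  | cons c t ih =>
    intro hpos θ hirr h0 h1
    have hct : ∀ x ∈ t, 0 < x := fun x hx => hpos x (by simp [hx])
    have hc : 0 < c := hpos c (by simp)
    have hc1 : (1:ℝ) ≤ (c:ℝ) := by exact_mod_cast hc
    -- facts about θ
    have hfθ : Int.fract θ = θ := Int.fract_eq_self.2 ⟨h0.le, h1⟩
    have hα1 : cfAlpha θ 1 = 1 / θ := by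
      show 1 / Int.fract (cfAlpha θ 0) = 1 / θ
      show 1 / Int.fract θ = 1 / θ
      rw [hfθ]
    have hθinv_irr : Irrational θ⁻¹ := hirr.inv
    have hθinv_gt : 1 < θ⁻¹ := (one_lt_inv₀ h0).2 h1
    -- φ
    set φ : ℝ := Int.fract (cfAlpha θ 1) with hφ
    have hφ_eq : φ = Int.fract θ⁻¹ := by rw [hφ, hα1, one_div]
    have hφ_irr : Irrational φ := by
      rw [hφ_eq, Int.fract]
      exact hθinv_irr.sub_intCast _
    have hφ0 : 0 < φ := by
      rw [hφ_eq]
      rw [Int.fract_pos]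
      intro hcon
      exact (hθinv_irr.ne_int _ hcon).elim
    have hφ1 : φ < 1 := by rw [hφ_eq]; exact Int.fract_lt_one _
    have hshift : ∀ i, 1 ≤ i → cfA θ (i+1) = cfA φ i := by
      intro i hi
      unfold cfA
      rw [cfAlpha_shift θ i hi]
    -- IH applied to φ
    have IH := ih hct φ hφ_irr hφ0 hφ1
    -- endpoints
    set xt : ℝ := ((V t : ℚ) : ℝ) with hxt
    set yt : ℝ := ((Vmu t : ℚ) : ℝ) with hyt
    have hxt0 : 0 ≤ xt := by rw [hxt]; exact_mod_cast V_nonneg hct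
    have hxt1 : xt ≤ 1 := by rw [hxt]; exact_mod_cast V_le_one hct
    have hyt0 : 0 ≤ yt := by rw [hyt]; exact_mod_cast Vmu_nonneg hct
    have hyt1 : yt ≤ 1 := by rw [hyt]; exact_mod_cast Vmu_le_one hct
    have hX : ((V (c :: t) : ℚ) : ℝ) = ((c:ℝ) + xt)⁻¹ := by
      show (((((c:ℕ) : ℚ) + V t)⁻¹ : ℚ) : ℝ) = _
      push_cast
      rw [hxt]
    have hY : ((Vmu (c :: t) : ℚ) : ℝ) = ((c:ℝ) + yt)⁻¹ := by
      show (((((c:ℕ) : ℚ) + Vmu t)⁻¹ : ℚ) : ℝ) = _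
      push_cast
      rw [hyt]
    have hcx : (0:ℝ) < (c:ℝ) + xt := by linarith
    have hcy : (0:ℝ) < (c:ℝ) + yt := by linarith
    -- main equivalence
    -- LHS decomposition
    have hdec : (∀ i : ℕ, 1 ≤ i → i ≤ (c :: t).length → cfA θ i = ((c :: t).getD (i-1) 0 : ℤ)) ↔
        (cfA θ 1 = (c : ℤ) ∧
          ∀ i : ℕ, 1 ≤ i → i ≤ t.length → cfA φ i = (t.getD (i-1) 0 : ℤ)) := by
      constructor
      · intro H
        refine ⟨by simpa using H 1 le_rfl (by simp), ?_⟩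
        intro i h1i hit
        obtain ⟨j, rfl⟩ : ∃ j, i = j + 1 := ⟨i - 1, by omega⟩
        rw [← hshift (j+1) (by omega)]
        have := H (j+2) (by omega) (by simp; omega)
        simpa using this
      · rintro ⟨H1, H2⟩ i h1i hil
        obtain ⟨j, rfl⟩ : ∃ j, i = j + 1 := ⟨i - 1, by omega⟩
        rcases Nat.eq_zero_or_pos j with rfl | hj
        · simpa using H1
        · obtain ⟨k, rfl⟩ : ∃ k, j = k + 1 := ⟨j - 1, by omega⟩
          rw [hshift (k+1) (by omega), H2 (k+1) (by omega) (by simp at hil; omega)]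
          simp
    -- cfA θ 1 = c ↔ ⌊θ⁻¹⌋ = c
    have hA1 : cfA θ 1 = (c : ℤ) ↔ ⌊θ⁻¹⌋ = (c : ℤ) := by
      unfold cfA
      rw [hα1, one_div]
    -- the interval transfer
    have hφ_eq' : φ = Int.fract θ⁻¹ := hφ_eq
    have htrans :
        (min (((c:ℝ) + xt)⁻¹) (((c:ℝ) + yt)⁻¹) < θ ∧
          θ < max (((c:ℝ) + xt)⁻¹) (((c:ℝ) + yt)⁻¹)) ↔
        (⌊θ⁻¹⌋ = (c : ℤ) ∧ (min xt yt < φ ∧ φ < max xt yt)) := by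
      rcases le_total xt yt with hle | hle
      · have hmin : min (((c:ℝ) + xt)⁻¹) (((c:ℝ) + yt)⁻¹) = ((c:ℝ) + yt)⁻¹ :=
          min_eq_right (by gcongr <;> linarith)
        have hmax : max (((c:ℝ) + xt)⁻¹) (((c:ℝ) + yt)⁻¹) = ((c:ℝ) + xt)⁻¹ :=
          max_eq_left (by gcongr <;> linarith)
        rw [hmin, hmax, min_eq_left hle, max_eq_right hle, hφ_eq']
        exact transfer hc1 hθinv_irr h0 hxt0 hle hyt1
      · have hmin : min (((c:ℝ) + xt)⁻¹) (((c:ℝ) + yt)⁻¹) = ((c:ℝ) + xt)⁻¹ :=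
          min_eq_left (by gcongr <;> linarith)
        have hmax : max (((c:ℝ) + xt)⁻¹) (((c:ℝ) + yt)⁻¹) = ((c:ℝ) + yt)⁻¹ :=
          max_eq_right (by gcongr <;> linarith)
        rw [hmin, hmax, min_eq_right hle, max_eq_left hle, hφ_eq']
        exact transfer hc1 hθinv_irr h0 hyt0 hle hxt1
    rw [hdec, IH, hX, hY, htrans, hA1]
section Counting

open Filter Finset

variable {x y : ℝ}

/-- Block finsets. -/
noncomputable def TB (x y : ℝ) (n : ℕ) : Finset ℕ :=
  Finset.Ioo ⌊((n:ℝ)+x)^2⌋₊ ⌈((n:ℝ)+y)^2⌉₊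

lemma mem_TB (hx : 0 ≤ x) {n d : ℕ} :
    d ∈ TB x y n ↔ ((n:ℝ)+x)^2 < (d:ℝ) ∧ (d:ℝ) < ((n:ℝ)+y)^2 := by
  rw [TB, Finset.mem_Ioo, Nat.floor_lt (by positivity), Nat.lt_ceil]

lemma card_TB_upper (hx : 0 < x) (hxy : x < y) (hy : y ≤ 1) (n : ℕ) :
    ((TB x y n).card : ℝ) ≤ 2*n*(y-x) + 2 := by
  have hn0 : (0:ℝ) ≤ (n:ℝ) := n.cast_nonneg
  have hvu : ((n:ℝ)+y)^2 - ((n:ℝ)+x)^2 ≤ 2*n*(y-x) + 1 := by nlinarith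
  rw [TB, Nat.card_Ioo]
  set A := ⌈((n:ℝ)+y)^2⌉₊ with hA
  set B := ⌊((n:ℝ)+x)^2⌋₊ with hB
  have hAv : (A:ℝ) < ((n:ℝ)+y)^2 + 1 := Nat.ceil_lt_add_one (by positivity)
  have hBu : ((n:ℝ)+x)^2 < (B:ℝ) + 1 := Nat.lt_floor_add_one _
  rcases le_or_gt A (B+1) with h | h
  · rw [show A - B - 1 = 0 from by omega]
    push_cast
    nlinarith
  · rw [show A - B - 1 = A - (B+1) from by omega, Nat.cast_sub (by omega)]
    push_cast
    nlinarith

lemma card_TB_lower (hx : 0 < x) (hxy : x < y) (hy : y ≤ 1) (n : ℕ) :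
    2*n*(y-x) - 1 ≤ ((TB x y n).card : ℝ) := by
  have hn0 : (0:ℝ) ≤ (n:ℝ) := n.cast_nonneg
  have hvu : 2*n*(y-x) ≤ ((n:ℝ)+y)^2 - ((n:ℝ)+x)^2 := by nlinarith
  rw [TB, Nat.card_Ioo]
  set A := ⌈((n:ℝ)+y)^2⌉₊ with hA
  set B := ⌊((n:ℝ)+x)^2⌋₊ with hB
  have hAv : ((n:ℝ)+y)^2 ≤ (A:ℝ) := Nat.le_ceil _
  have hBu : (B:ℝ) ≤ ((n:ℝ)+x)^2 := Nat.floor_le (by positivity)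
  rcases le_or_gt A (B+1) with h | h
  · rw [show A - B - 1 = 0 from by omega]
    have : (A:ℝ) ≤ (B:ℝ) + 1 := by exact_mod_cast h
    push_cast
    nlinarith
  · rw [show A - B - 1 = A - (B+1) from by omega, Nat.cast_sub (by omega)]
    push_cast
    nlinarith

lemma TB_disjoint (hx : 0 ≤ x) (hy0 : 0 ≤ y) (hy : y ≤ 1) {n1 n2 : ℕ} (h : n1 < n2) :
    Disjoint (TB x y n1) (TB x y n2) := by
  rw [Finset.disjoint_left]
  intro d hd1 hd2
  rw [mem_TB hx] at hd1 hd2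
  have h1 : (d:ℝ) < ((n1:ℝ)+y)^2 := hd1.2
  have h2 : ((n2:ℝ)+x)^2 < (d:ℝ) := hd2.1
  have hc : ((n1:ℝ)+y) ≤ ((n2:ℝ)+x) := by
    have : (n1:ℝ) + 1 ≤ (n2:ℝ) := by exact_mod_cast h
    linarith
  have h0 : (0:ℝ) ≤ (n1:ℝ) + y := by positivity
  nlinarith [mul_self_le_mul_self h0 hc]

lemma mem_TB_iff_fract (hx : 0 < x) (hxy : x < y) (hy : y ≤ 1) {d n : ℕ} (hd : 0 < d) :
    d ∈ TB x y n ↔ (Nat.sqrt d = n ∧ x < Int.fract (Real.sqrt d) ∧ Int.fract (Real.sqrt d) < y) := by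
  have hd1 : (1:ℝ) ≤ (d:ℝ) := by exact_mod_cast hd
  have hsq : Real.sqrt d ^ 2 = (d:ℝ) := Real.sq_sqrt (by positivity)
  have hn' : (0:ℝ) ≤ (n:ℝ) := n.cast_nonneg
  have hnx : (0:ℝ) ≤ (n:ℝ) + x := by linarith [hx.le]
  have hny : (0:ℝ) < (n:ℝ) + y := by linarith [hx.trans hxy]
  constructor
  · intro hmem
    rw [mem_TB hx.le] at hmem
    obtain ⟨h1, h2⟩ := hmem
    have hs1 : ((n:ℝ) + x) < Real.sqrt d := (Real.lt_sqrt hnx).2 h1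
    have hs2 : Real.sqrt d < (n:ℝ) + y := (Real.sqrt_lt' hny).2 h2
    have hfl : ⌊Real.sqrt (d:ℝ)⌋ = (n:ℤ) := by
      rw [Int.floor_eq_iff]
      constructor
      · push_cast; linarith
      · push_cast; linarith
    have hns : Nat.sqrt d = n := by
      have := Real.floor_real_sqrt_eq_nat_sqrt (a := d)
      rw [hfl] at this
      exact_mod_cast this.symm
    refine ⟨hns, ?_, ?_⟩ <;> rw [Int.fract, hfl] <;> push_cast <;> linarith
  · rintro ⟨hns, hf1, hf2⟩
    have hfl : ⌊Real.sqrt (d:ℝ)⌋ = (n:ℤ) := by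
      rw [Real.floor_real_sqrt_eq_nat_sqrt, hns]
    rw [Int.fract, hfl] at hf1 hf2
    push_cast at hf1 hf2
    rw [mem_TB hx.le]
    constructor
    · have h1 : (n:ℝ) + x < Real.sqrt d := by linarith
      calc ((n:ℝ)+x)^2 < Real.sqrt d ^ 2 := by nlinarith [Real.sqrt_nonneg (d:ℝ)]
        _ = (d:ℝ) := hsq
    · have h2 : Real.sqrt d < (n:ℝ) + y := by linarith
      calc (d:ℝ) = Real.sqrt d ^ 2 := hsq.symm
        _ < ((n:ℝ)+y)^2 := by nlinarith [Real.sqrt_nonneg (d:ℝ)]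

lemma sum_range_cast (M : ℕ) : ∑ n ∈ Finset.range M, (n:ℝ) = M*(M-1)/2 := by
  induction M with
  | zero => simp
  | succ M ih =>
    rw [Finset.sum_range_succ, ih]
    push_cast
    ring

end Counting
section Counting2

open Filter Finset

lemma nat_sqrt_tendsto : Filter.Tendsto (fun N : ℕ => Nat.sqrt N) atTop atTop := by
  apply Filter.tendsto_atTop_atTop.2
  intro b
  exact ⟨b*b, fun a ha => Nat.le_sqrt.2 ha⟩

lemma aux_B_tendsto : Filter.Tendsto (fun N : ℕ => (Nat.sqrt N : ℝ) / N) atTop (nhds 0) := by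
  have h1 : Filter.Tendsto (fun N : ℕ => 1 / (Nat.sqrt N : ℝ)) atTop (nhds 0) := by
    have := tendsto_natCast_atTop_atTop (R := ℝ)
    exact tendsto_one_div_atTop_nhds_zero_nat.comp nat_sqrt_tendsto
  apply squeeze_zero' (g := fun N : ℕ => 1 / (Nat.sqrt N : ℝ))
  · filter_upwards [eventually_ge_atTop 1] with N hN
    positivity
  · filter_upwards [eventually_ge_atTop 1] with N hN
    have hM1 : 1 ≤ Nat.sqrt N := Nat.le_sqrt.2 (by omega)
    have hM1' : (1:ℝ) ≤ (Nat.sqrt N : ℝ) := by exact_mod_cast hM1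
    have hN' : (0:ℝ) < (N:ℝ) := by exact_mod_cast hN
    rw [div_le_div_iff₀ hN' (by linarith)]
    have : (Nat.sqrt N : ℝ)^2 ≤ (N:ℝ) := by
      exact_mod_cast Nat.sqrt_le' N
    nlinarith
  · exact h1

lemma aux_A_tendsto : Filter.Tendsto (fun N : ℕ => ((Nat.sqrt N : ℝ))^2 / N) atTop (nhds 1) := by
  have hlow : Filter.Tendsto (fun N : ℕ => 1 - 2 * ((Nat.sqrt N : ℝ)/N) - 1/(N:ℝ)) atTop (nhds 1) := by
    have := ((tendsto_const_nhds (x := (1:ℝ))).sub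
      ((tendsto_const_nhds (x := (2:ℝ))).mul aux_B_tendsto)).sub
      tendsto_one_div_atTop_nhds_zero_nat
    simpa using this
  apply tendsto_of_tendsto_of_tendsto_of_le_of_le' hlow tendsto_const_nhds
  · filter_upwards [eventually_ge_atTop 1] with N hN
    have hN' : (0:ℝ) < (N:ℝ) := by exact_mod_cast hN
    have h2 : N < (Nat.sqrt N).succ ^ 2 := Nat.lt_succ_sqrt' N
    have h2' : (N:ℝ) < ((Nat.sqrt N : ℝ) + 1) ^ 2 := by exact_mod_cast h2
    have key : (N:ℝ) - 2*(Nat.sqrt N:ℝ) - 1 ≤ (Nat.sqrt N:ℝ)^2 := by nlinarith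
    have e : 1 - 2*((Nat.sqrt N:ℝ)/N) - 1/(N:ℝ) = ((N:ℝ) - 2*(Nat.sqrt N:ℝ) - 1)/N := by
      field_simp
    rw [e]
    gcongr
  · filter_upwards [eventually_ge_atTop 1] with N hN
    have hN' : (0:ℝ) < (N:ℝ) := by exact_mod_cast hN
    have h1 : (Nat.sqrt N : ℝ)^2 ≤ (N:ℝ) := by exact_mod_cast Nat.sqrt_le' N
    rw [div_le_one hN']
    nlinarith

end Counting2
section Counting3

open Filter Finset

lemma countB {x y : ℝ} (hx : 0 < x) (hxy : x < y) (hy : y ≤ 1) :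
    Filter.Tendsto (fun N : ℕ =>
      (({d : ℕ | 0 < d ∧ d ≤ N ∧ x < Int.fract (Real.sqrt d) ∧ Int.fract (Real.sqrt d) < y}.ncard : ℝ)) / N)
      atTop (nhds (y - x)) := by
  classical
  have hy0 : 0 ≤ y := le_of_lt (hx.trans hxy)
  set F : ℕ → Finset ℕ := fun N => (Finset.Icc 1 N).filter
    (fun d => x < Int.fract (Real.sqrt d) ∧ Int.fract (Real.sqrt d) < y) with hF
  have hset : ∀ N : ℕ, {d : ℕ | 0 < d ∧ d ≤ N ∧ x < Int.fract (Real.sqrt d) ∧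
      Int.fract (Real.sqrt d) < y} = ↑(F N) := by
    intro N
    ext d
    simp only [hF, Finset.coe_filter, Finset.mem_Icc, Set.mem_setOf_eq]
    constructor
    · rintro ⟨h1, h2, h3⟩; exact ⟨⟨h1, h2⟩, h3⟩
    · rintro ⟨⟨h1, h2⟩, h3⟩; exact ⟨h1, h2, h3⟩
  have hsub_up : ∀ N, F N ⊆ (Finset.range (Nat.sqrt N + 1)).biUnion (TB x y) := by
    intro N d hd
    simp only [hF, Finset.mem_filter, Finset.mem_Icc] at hd
    obtain ⟨⟨h1, h2⟩, h3⟩ := hd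
    rw [Finset.mem_biUnion]
    refine ⟨Nat.sqrt d, ?_, ?_⟩
    · rw [Finset.mem_range]
      have := Nat.sqrt_le_sqrt h2
      omega
    · exact (mem_TB_iff_fract hx hxy hy (by omega)).2 ⟨rfl, h3⟩
  have hsub_lo : ∀ N, (Finset.range (Nat.sqrt N)).biUnion (TB x y) ⊆ F N := by
    intro N d hd
    rw [Finset.mem_biUnion] at hd
    obtain ⟨n, hn, hdn⟩ := hd
    rw [Finset.mem_range] at hn
    have hmem := (mem_TB hx.le).1 hdn
    have hd0 : 0 < d := by
      by_contra hcon
      have : d = 0 := by omega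
      subst this
      have h0 : ((n:ℝ) + x)^2 < 0 := by exact_mod_cast hmem.1
      nlinarith [sq_nonneg ((n:ℝ) + x)]
    have hdN : d ≤ N := by
      have h1 : ((n:ℝ) + y) ≤ (Nat.sqrt N : ℝ) := by
        have : (n:ℝ) + 1 ≤ (Nat.sqrt N : ℝ) := by exact_mod_cast hn
        linarith
      have h2 : (0:ℝ) ≤ (n:ℝ) + y := by positivity
      have h3 : (d:ℝ) < ((Nat.sqrt N : ℝ))^2 := lt_of_lt_of_le hmem.2 (by nlinarith)
      have h4 : ((Nat.sqrt N : ℝ))^2 ≤ (N:ℝ) := by exact_mod_cast Nat.sqrt_le' N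
      have : (d:ℝ) < (N:ℝ) := lt_of_lt_of_le h3 h4
      exact_mod_cast this.le
    have hP := ((mem_TB_iff_fract hx hxy hy hd0).1 hdn).2
    simp only [hF, Finset.mem_filter, Finset.mem_Icc]
    exact ⟨⟨by omega, hdN⟩, hP⟩
  -- card bounds
  have hcard_up : ∀ N, ((F N).card : ℝ) ≤
      (y-x) * (Nat.sqrt N : ℝ) * ((Nat.sqrt N : ℝ)+1) + 2*((Nat.sqrt N : ℝ)+1) := by
    intro N
    set M := Nat.sqrt N
    have h1 : (F N).card ≤ ∑ n ∈ Finset.range (M+1), (TB x y n).card :=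
      le_trans (Finset.card_le_card (hsub_up N)) (Finset.card_biUnion_le)
    have h2 : ((F N).card : ℝ) ≤ ∑ n ∈ Finset.range (M+1), ((TB x y n).card : ℝ) := by
      rw [← Nat.cast_sum]
      exact_mod_cast h1
    have h3 : ∑ n ∈ Finset.range (M+1), ((TB x y n).card : ℝ) ≤
        ∑ n ∈ Finset.range (M+1), (2*(n:ℝ)*(y-x) + 2) :=
      Finset.sum_le_sum (fun n _ => card_TB_upper hx hxy hy n)
    have h4 : ∑ n ∈ Finset.range (M+1), (2*(n:ℝ)*(y-x) + 2) =
        (y-x) * (M:ℝ) * ((M:ℝ)+1) + 2*((M:ℝ)+1) := by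
      rw [Finset.sum_add_distrib, Finset.sum_const, Finset.card_range]
      have : ∑ n ∈ Finset.range (M+1), (2*(n:ℝ)*(y-x)) =
          2*(y-x) * ∑ n ∈ Finset.range (M+1), (n:ℝ) := by
        rw [Finset.mul_sum]
        congr 1
        ext n
        ring
      rw [this, sum_range_cast (M+1)]
      push_cast
      ring
    linarith
  have hcard_lo : ∀ N,
      (y-x) * (Nat.sqrt N : ℝ) * ((Nat.sqrt N : ℝ)-1) - (Nat.sqrt N : ℝ) ≤ ((F N).card : ℝ) := by
    intro N
    set M := Nat.sqrt N
    have hdisj : ∀ n1 ∈ Finset.range M, ∀ n2 ∈ Finset.range M, n1 ≠ n2 →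
        Disjoint (TB x y n1) (TB x y n2) := by
      intro n1 _ n2 _ hne
      rcases lt_or_gt_of_ne hne with h | h
      · exact TB_disjoint hx.le hy0 hy h
      · exact (TB_disjoint hx.le hy0 hy h).symm
    have h1 : ∑ n ∈ Finset.range M, (TB x y n).card ≤ (F N).card := by
      rw [← Finset.card_biUnion hdisj]
      exact Finset.card_le_card (hsub_lo N)
    have h2 : ∑ n ∈ Finset.range M, ((TB x y n).card : ℝ) ≤ ((F N).card : ℝ) := by
      rw [← Nat.cast_sum]
      exact_mod_cast h1
    have h3 : ∑ n ∈ Finset.range M, (2*(n:ℝ)*(y-x) - 1) ≤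
        ∑ n ∈ Finset.range M, ((TB x y n).card : ℝ) :=
      Finset.sum_le_sum (fun n _ => card_TB_lower hx hxy hy n)
    have h4 : ∑ n ∈ Finset.range M, (2*(n:ℝ)*(y-x) - 1) =
        (y-x) * (M:ℝ) * ((M:ℝ)-1) - (M:ℝ) := by
      rw [Finset.sum_sub_distrib, Finset.sum_const, Finset.card_range]
      have : ∑ n ∈ Finset.range M, (2*(n:ℝ)*(y-x)) =
          2*(y-x) * ∑ n ∈ Finset.range M, (n:ℝ) := by
        rw [Finset.mul_sum]
        congr 1
        ext n
        ring
      rw [this, sum_range_cast M]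
      ring
    linarith
  -- limits
  have hlowf : Filter.Tendsto (fun N : ℕ =>
      (y-x) * ((Nat.sqrt N : ℝ)^2/N) - (y-x) * ((Nat.sqrt N : ℝ)/N) - (Nat.sqrt N : ℝ)/N)
      atTop (nhds (y-x)) := by
    have := ((tendsto_const_nhds (x := (y-x))).mul aux_A_tendsto).sub
      (((tendsto_const_nhds (x := (y-x))).mul aux_B_tendsto).add aux_B_tendsto)
    simp only [mul_one, mul_zero, add_zero, sub_zero] at this
    convert this using 2 <;> ring
  have hupf : Filter.Tendsto (fun N : ℕ =>
      (y-x) * ((Nat.sqrt N : ℝ)^2/N) + (y-x) * ((Nat.sqrt N : ℝ)/N) + 2*((Nat.sqrt N : ℝ)/N)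
        + 2*(1/(N:ℝ)))
      atTop (nhds (y-x)) := by
    have := (((tendsto_const_nhds (x := (y-x))).mul aux_A_tendsto).add
      ((tendsto_const_nhds (x := (y-x))).mul aux_B_tendsto)).add
      (((tendsto_const_nhds (x := (2:ℝ))).mul aux_B_tendsto).add
        ((tendsto_const_nhds (x := (2:ℝ))).mul tendsto_one_div_atTop_nhds_zero_nat))
    simp only [mul_one, mul_zero, add_zero] at this
    convert this using 2
    ring
  rw [show (fun N : ℕ =>
      (({d : ℕ | 0 < d ∧ d ≤ N ∧ x < Int.fract (Real.sqrt d) ∧ Int.fract (Real.sqrt d) < y}.ncard : ℝ)) / N)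
      = fun N : ℕ => (((F N).card : ℝ)) / N from ?_]
  · apply tendsto_of_tendsto_of_tendsto_of_le_of_le' hlowf hupf
    · filter_upwards [eventually_ge_atTop 1] with N hN
      have hN' : (0:ℝ) < (N:ℝ) := by exact_mod_cast hN
      set M : ℝ := (Nat.sqrt N : ℝ)
      have e : (y-x) * (M^2/N) - (y-x) * (M/N) - M/N = ((y-x)*M*(M-1) - M)/N := by
        field_simp
      rw [e]
      apply div_le_div_of_nonneg_right (hcard_lo N) hN'.le |>.trans_eq rfl
    · filter_upwards [eventually_ge_atTop 1] with N hN
      have hN' : (0:ℝ) < (N:ℝ) := by exact_mod_cast hN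
      set M : ℝ := (Nat.sqrt N : ℝ)
      have e : (y-x) * (M^2/N) + (y-x) * (M/N) + 2*(M/N) + 2*(1/(N:ℝ))
          = ((y-x)*M*(M+1) + 2*(M+1))/N := by
        field_simp
        ring
      rw [e]
      exact div_le_div_of_nonneg_right (hcard_up N) hN'.le |>.trans_eq rfl
  · funext N
    rw [hset N, Set.ncard_coe_finset]

end Counting3
lemma Kt_pos {l : List ℕ} (hne : l ≠ []) (h : ∀ x ∈ l, 0 < x) : 0 < Kt l := by
  cases l with
  | nil => exact absurd rfl hne
  | cons c t =>
    show 0 < K t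
    exact K_pos (fun z hz => h z (by simp [hz]))
end CF8

open CF8 in
/-- for positive integers `a_1, …, a_m`, with `q_m` and `q_{m-1}` the denominators
in lowest terms of `[0; a_1,…,a_m]` and `[0; a_1,…,a_{m-1}]`, the number `f(N)` of positive
non-square `d ≤ N` whose continued fraction of `√d` has `i`-th partial quotient `a_i` for all
`1 ≤ i ≤ m` satisfies `f(N)/N → 1/(q_m (q_m + q_{m-1}))`. -/
theorem stmt_8 (m : ℕ) (hm : 1 ≤ m) (a : ℕ → ℕ) (ha : ∀ i, 1 ≤ i → i ≤ m → 0 < a i) :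
    Filter.Tendsto
      (fun N : ℕ =>
        (({d : ℕ | 0 < d ∧ d ≤ N ∧ ¬ IsSquare d ∧
            ∀ i, 1 ≤ i → i ≤ m → cfA (Real.sqrt d) i = (a i : ℤ)}.ncard : ℝ) / N))
      Filter.atTop
      (nhds (1 / ((((cfTail a m m)⁻¹).den : ℝ) *
        ((((cfTail a m m)⁻¹).den : ℝ) + (((cfTail a (m - 1) (m - 1))⁻¹).den : ℝ))))) := by
  classical
  set l : List ℕ := lst a m m with hl
  have hlpos : ∀ z ∈ l, 0 < z := lst_pos ha m le_rfl
  have hlne : l ≠ [] := by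
    obtain ⟨m', rfl⟩ : ∃ m', m = m' + 1 := ⟨m - 1, by omega⟩
    simp [hl, lst]
  set dl : List ℕ := lst a (m-1) (m-1) with hdl
  have hdl_eq : l.dropLast = dl := by
    have h := lst_dropLast a m (m-1)
    rw [show m - 1 + 1 = m from by omega] at h
    exact h
  have hdlpos : ∀ z ∈ dl, 0 < z := by
    rw [← hdl_eq]
    exact fun z hz => hlpos z (List.dropLast_subset _ hz)
  set q : ℕ := K l with hqdef
  set p : ℕ := Kt l with hpdef
  set q' : ℕ := K dl with hq'def
  set p' : ℕ := Kt dl with hp'def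
  have hq : 0 < q := K_pos hlpos
  have hq' : 0 < q' := K_pos hdlpos
  have hp : 0 < p := Kt_pos hlne hlpos
  -- denominators
  have hVl : V l = ((p:ℤ) : ℚ) / ((q:ℤ) : ℚ) := by
    rw [V_eq hlpos]; push_cast; rfl
  have hVdl : V dl = ((p':ℤ) : ℚ) / ((q':ℤ) : ℚ) := by
    rw [V_eq hdlpos]; push_cast; rfl
  have hden1 : ((cfTail a m m)⁻¹).den = q := by
    rw [cfTail_inv a m m, ← hl, hVl]
    have := Rat.den_div_eq_of_coprime (a := (p:ℤ)) (b := (q:ℤ))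
      (by exact_mod_cast hq) (by simpa using (K_coprime l).symm)
    exact_mod_cast this
  have hden2 : ((cfTail a (m-1) (m-1))⁻¹).den = q' := by
    rw [cfTail_inv a (m-1) (m-1), ← hdl, hVdl]
    have := Rat.den_div_eq_of_coprime (a := (p':ℤ)) (b := (q':ℤ))
      (by exact_mod_cast hq') (by simpa using (K_coprime dl).symm)
    exact_mod_cast this
  -- endpoints
  set X : ℝ := ((V l : ℚ) : ℝ) with hX
  set Y : ℝ := ((Vmu l : ℚ) : ℝ) with hY
  have hqR : (0:ℝ) < (q:ℝ) := by exact_mod_cast hq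
  have hq'R : (0:ℝ) < (q':ℝ) := by exact_mod_cast hq'
  have hpR : (0:ℝ) < (p:ℝ) := by exact_mod_cast hp
  have hp'R : (0:ℝ) ≤ (p':ℝ) := by positivity
  have hXval : X = (p:ℝ)/(q:ℝ) := by rw [hX, hVl]; push_cast; rfl
  have hYval : Y = ((p:ℝ)+(p':ℝ))/((q:ℝ)+(q':ℝ)) := by
    rw [hY, Vmu_eq hlne hlpos, hdl_eq]
    push_cast
    rfl
  have hX0 : 0 < X := by rw [hXval]; positivity
  have hY0 : 0 < Y := by rw [hYval]; positivity
  have hX1 : X ≤ 1 := by rw [hX]; exact_mod_cast V_le_one hlpos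
  have hY1 : Y ≤ 1 := by rw [hY]; exact_mod_cast Vmu_le_one hlpos
  -- determinant
  have hdet : ((q:ℤ)) * (p':ℤ) - (p:ℤ) * (q':ℤ) = (-1)^l.length := by
    have h := detK l hlne
    rw [hdl_eq] at h
    exact_mod_cast h
  have hdiff : X - Y = ((p:ℝ)*(q':ℝ) - (q:ℝ)*(p':ℝ))/((q:ℝ)*((q:ℝ)+(q':ℝ))) := by
    rw [hXval, hYval]
    field_simp
    ring
  have hdetR : (q:ℝ)*(p':ℝ) - (p:ℝ)*(q':ℝ) = (-1:ℝ)^l.length := by exact_mod_cast hdet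
  have habs : |X - Y| = 1/((q:ℝ)*((q:ℝ)+(q':ℝ))) := by
    rw [hdiff, abs_div]
    have h1 : |(p:ℝ)*(q':ℝ) - (q:ℝ)*(p':ℝ)| = 1 := by
      have : (p:ℝ)*(q':ℝ) - (q:ℝ)*(p':ℝ) = -((-1:ℝ)^l.length) := by linarith
      rw [this, abs_neg, abs_pow, abs_neg, abs_one, one_pow]
    rw [h1, abs_of_pos (by positivity)]
  have hXY_ne : X ≠ Y := by
    intro h
    rw [h, sub_self, abs_zero] at habs
    have : (0:ℝ) < 1/((q:ℝ)*((q:ℝ)+(q':ℝ))) := by positivity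
    linarith
  have hmin0 : 0 < min X Y := lt_min hX0 hY0
  have hminmax : min X Y < max X Y := min_lt_max.2 hXY_ne
  have hmax1 : max X Y ≤ 1 := max_le hX1 hY1
  have hmaxmin : max X Y - min X Y = 1/((q:ℝ)*((q:ℝ)+(q':ℝ))) := by
    rw [max_sub_min_eq_abs, abs_sub_comm, habs]
  -- equivalence of conditions
  have hlen : l.length = m := lst_length a m m
  have hgetD : ∀ i, 1 ≤ i → i ≤ m → (l.getD (i-1) 0) = a i := by
    intro i h1 h2
    rw [hl, lst_getD a m m (i-1) le_rfl (by omega)]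
    congr 1
    omega
  have hiff : ∀ d : ℕ, 0 < d → ¬ IsSquare d →
      ((∀ i, 1 ≤ i → i ≤ m → cfA (Real.sqrt d) i = (a i : ℤ)) ↔
        (min X Y < Int.fract (Real.sqrt d) ∧ Int.fract (Real.sqrt d) < max X Y)) := by
    intro d hd0 hdsq
    have hirr : Irrational (Real.sqrt d) := irrational_sqrt_natCast_iff.2 hdsq
    set θ : ℝ := Int.fract (Real.sqrt d) with hθ
    have hθirr : Irrational θ := by
      rw [hθ, Int.fract]
      exact hirr.sub_intCast _
    have hθ0 : 0 < θ := by
      rw [hθ, Int.fract_pos]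
      exact fun hcon => (hirr.ne_int _ hcon).elim
    have hθ1 : θ < 1 := Int.fract_lt_one _
    have hbridge : (∀ i, 1 ≤ i → i ≤ m → cfA (Real.sqrt d) i = (a i : ℤ)) ↔
        (∀ i, 1 ≤ i → i ≤ l.length → cfA θ i = (l.getD (i-1) 0 : ℤ)) := by
      constructor
      · intro H i h1 h2
        rw [← cfA_fract _ _ h1, H i h1 (by omega), hgetD i h1 (by omega)]
      · intro H i h1 h2
        rw [cfA_fract _ _ h1, H i h1 (by omega), hgetD i h1 h2]
    rw [hbridge, stepA l hlpos θ hθirr hθ0 hθ1]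
  -- set equality
  have hsetEq : ∀ N : ℕ,
      {d : ℕ | 0 < d ∧ d ≤ N ∧ ¬ IsSquare d ∧
        ∀ i, 1 ≤ i → i ≤ m → cfA (Real.sqrt d) i = (a i : ℤ)} =
      {d : ℕ | 0 < d ∧ d ≤ N ∧ min X Y < Int.fract (Real.sqrt d) ∧
        Int.fract (Real.sqrt d) < max X Y} := by
    intro N
    ext d
    simp only [Set.mem_setOf_eq]
    constructor
    · rintro ⟨h1, h2, h3, h4⟩
      exact ⟨h1, h2, (hiff d h1 h3).1 h4⟩
    · rintro ⟨h1, h2, h3⟩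
      have hdsq : ¬ IsSquare d := by
        intro hcon
        obtain ⟨k, rfl⟩ := hcon
        have : Real.sqrt (k*k : ℕ) = (k:ℝ) := by
          push_cast
          rw [Real.sqrt_mul_self (by positivity)]
        rw [this] at h3
        rw [Int.fract_natCast] at h3
        linarith [h3.1, hmin0]
      exact ⟨h1, h2, hdsq, (hiff d h1 hdsq).2 h3⟩
  have hkey := countB hmin0 hminmax hmax1
  have hfun : (fun N : ℕ =>
      (({d : ℕ | 0 < d ∧ d ≤ N ∧ ¬ IsSquare d ∧
          ∀ i, 1 ≤ i → i ≤ m → cfA (Real.sqrt d) i = (a i : ℤ)}.ncard : ℝ) / N)) =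
      (fun N : ℕ =>
      (({d : ℕ | 0 < d ∧ d ≤ N ∧ min X Y < Int.fract (Real.sqrt d) ∧
          Int.fract (Real.sqrt d) < max X Y}.ncard : ℝ) / N)) := by
    funext N
    rw [hsetEq N]
  rw [hfun]
  have hval : (1 : ℝ) / ((((cfTail a m m)⁻¹).den : ℝ) *
      ((((cfTail a m m)⁻¹).den : ℝ) + (((cfTail a (m - 1) (m - 1))⁻¹).den : ℝ)))
      = max X Y - min X Y := by
    rw [hden1, hden2, hmaxmin]
  rw [hval]
  exact hkey
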